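/- (Lemma on Cartan projections, matrix form.) Let Ω be a compact subset of GL₂(ℚ_p). Then there exists N₀ > 0 satisfying: for every h ∈ Ω there exists X_h ∈ ℝ such that for all integers n₁, n₂ with n₁ − n₂ ≥ N₀, setting m = diag(p^{n₁}, p^{n₂}), one has F(m·h) = (n₁ − n₂) · Real.log p + X_h. -/

import Mathlib

open Matrix

private lemma iSup_fin2 (f : Fin 2 → ℝ) : (⨆ i, f i) = max (f 0) (f 1) := by
  apply le_antisymm
  · exact ciSup_le fun i => by fin_cases i <;> simp [le_max_left, le_max_right]
  · exact max_le (le_ciSup (Set.Finite.bddAbove (Set.finite_range f)) 0)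
      (le_ciSup (Set.Finite.bddAbove (Set.finite_range f)) 1)

/-- The function `F(x) = log( max_{i,j} ‖x_{ij}‖² / ‖det x‖ )` on 2×2 matrices over `ℚ_[p]`. -/
noncomputable def F {p : ℕ} [Fact p.Prime] (x : Matrix (Fin 2) (Fin 2) ℚ_[p]) : ℝ :=
  Real.log ((⨆ i : Fin 2, ⨆ j : Fin 2, ‖x i j‖ ^ 2) / ‖x.det‖)

theorem stmt3 (p : ℕ) [Fact p.Prime] (Ω : Set (GL (Fin 2) ℚ_[p])) (hΩ : IsCompact Ω) :
    ∃ N₀ : ℝ, 0 < N₀ ∧ ∀ h ∈ Ω, ∃ X : ℝ, ∀ n₁ n₂ : ℤ, N₀ ≤ ((n₁ - n₂ : ℤ) : ℝ) →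
      F (Matrix.diagonal ![(p : ℚ_[p]) ^ n₁, (p : ℚ_[p]) ^ n₂] *
          (↑h : Matrix (Fin 2) (Fin 2) ℚ_[p])) =
        ((n₁ - n₂ : ℤ) : ℝ) * Real.log p + X := by
  have hp : p.Prime := Fact.out
  set q : ℝ := (p : ℝ) with hqdef
  have hq1 : 1 < q := by rw [hqdef]; exact_mod_cast hp.one_lt
  have hq2 : (2 : ℝ) ≤ q := by rw [hqdef]; exact_mod_cast hp.two_le
  have hq0 : (0 : ℝ) < q := lt_trans one_pos hq1
  -- entry-norm functions
  set fA : GL (Fin 2) ℚ_[p] → ℝ := fun h =>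
    max (‖(↑h : Matrix (Fin 2) (Fin 2) ℚ_[p]) 0 0‖ ^ 2)
        (‖(↑h : Matrix (Fin 2) (Fin 2) ℚ_[p]) 0 1‖ ^ 2) with hfA
  set fB : GL (Fin 2) ℚ_[p] → ℝ := fun h =>
    max (‖(↑h : Matrix (Fin 2) (Fin 2) ℚ_[p]) 1 0‖ ^ 2)
        (‖(↑h : Matrix (Fin 2) (Fin 2) ℚ_[p]) 1 1‖ ^ 2) with hfB
  have hval : Continuous (fun h : GL (Fin 2) ℚ_[p] => (↑h : Matrix (Fin 2) (Fin 2) ℚ_[p])) :=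
    Units.continuous_val
  have hent : ∀ (i j : Fin 2), Continuous fun h : GL (Fin 2) ℚ_[p] =>
      ‖(↑h : Matrix (Fin 2) (Fin 2) ℚ_[p]) i j‖ ^ 2 := fun i j =>
    (((continuous_apply j).comp ((continuous_apply i).comp hval)).norm.pow 2)
  have hcA : Continuous fA := (hent 0 0).max (hent 0 1)
  have hcB : Continuous fB := (hent 1 0).max (hent 1 1)
  rcases Set.eq_empty_or_nonempty Ω with hemp | hne
  · exact ⟨1, one_pos, by simp [hemp]⟩
  obtain ⟨zA, hzA, hzAmax⟩ := hΩ.exists_isMaxOn hne hcA.continuousOn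
  obtain ⟨zB, hzB, hzBmin⟩ := hΩ.exists_isMinOn hne hcB.continuousOn
  set CA := fA zA with hCA
  set CB := fB zB with hCB
  have hdetΩ : ∀ h : GL (Fin 2) ℚ_[p], (↑h : Matrix (Fin 2) (Fin 2) ℚ_[p]).det ≠ 0 := by
    intro h
    have : IsUnit (↑h : Matrix (Fin 2) (Fin 2) ℚ_[p]) := h.isUnit
    exact ((Matrix.isUnit_iff_isUnit_det _).mp this).ne_zero
  have hCBpos : 0 < CB := by
    set gz := (↑zB : Matrix (Fin 2) (Fin 2) ℚ_[p]) with hgz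
    have hne10 : gz 1 0 ≠ 0 ∨ gz 1 1 ≠ 0 := by
      by_contra hcon
      push_neg at hcon
      apply hdetΩ zB
      rw [← hgz, Matrix.det_fin_two]
      simp [hcon.1, hcon.2]
    rcases hne10 with hnz | hnz
    · exact lt_of_lt_of_le (pow_pos (norm_pos_iff.mpr hnz) 2) (le_max_left _ _)
    · exact lt_of_lt_of_le (pow_pos (norm_pos_iff.mpr hnz) 2) (le_max_right _ _)
  obtain ⟨K, hKge⟩ := exists_nat_ge (CA / CB)
  have hKK : CA ≤ 2 ^ K * CB := by
    have h2 : (K : ℝ) ≤ 2 ^ K := by exact_mod_cast (Nat.lt_two_pow_self (n := K)).le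
    have := (div_le_iff₀ hCBpos).mp (hKge.trans h2)
    linarith
  refine ⟨(K : ℝ) + 1, by positivity, ?_⟩
  intro h hh
  set g := (↑h : Matrix (Fin 2) (Fin 2) ℚ_[p]) with hg
  have hdet : g.det ≠ 0 := hdetΩ h
  set D := ‖g.det‖ with hD
  have hDpos : 0 < D := by rwa [hD, norm_pos_iff]
  set B2 := fB h with hB2
  set A2 := fA h with hA2
  have hB2pos : 0 < B2 := lt_of_lt_of_le hCBpos (hzBmin hh)
  refine ⟨Real.log B2 - Real.log D, ?_⟩
  intro n₁ n₂ hn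
  set k : ℤ := n₁ - n₂ with hk
  have hkK : (K : ℤ) + 1 ≤ k := by exact_mod_cast hn
  set t₁ : ℝ := q ^ (-n₁) with ht₁
  set t₂ : ℝ := q ^ (-n₂) with ht₂
  have ht₁pos : 0 < t₁ := zpow_pos hq0 _
  have ht₂pos : 0 < t₂ := zpow_pos hq0 _
  set m : Matrix (Fin 2) (Fin 2) ℚ_[p] :=
    Matrix.diagonal ![(p : ℚ_[p]) ^ n₁, (p : ℚ_[p]) ^ n₂] with hm
  -- norms of entries of m * g
  have hnorm0 : ∀ j : Fin 2, ‖(m * g) 0 j‖ ^ 2 = t₁ ^ 2 * ‖g 0 j‖ ^ 2 := by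
    intro j
    rw [hm, Matrix.diagonal_mul]
    simp only [Matrix.cons_val_zero]
    rw [norm_mul, Padic.norm_p_zpow]
    ring
  have hnorm1 : ∀ j : Fin 2, ‖(m * g) 1 j‖ ^ 2 = t₂ ^ 2 * ‖g 1 j‖ ^ 2 := by
    intro j
    rw [hm, Matrix.diagonal_mul]
    simp only [Matrix.cons_val_one, Matrix.head_cons, Matrix.cons_val_zero]
    rw [norm_mul, Padic.norm_p_zpow]
    ring
  -- the sup
  have hsup : (⨆ i : Fin 2, ⨆ j : Fin 2, ‖(m * g) i j‖ ^ 2) = max (t₁ ^ 2 * A2) (t₂ ^ 2 * B2) := by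
    rw [iSup_fin2 (fun i => ⨆ j : Fin 2, ‖(m * g) i j‖ ^ 2),
      iSup_fin2 (fun j => ‖(m * g) 0 j‖ ^ 2), iSup_fin2 (fun j => ‖(m * g) 1 j‖ ^ 2),
      hnorm0 0, hnorm0 1, hnorm1 0, hnorm1 1,
      mul_max_of_nonneg _ _ (by positivity : (0:ℝ) ≤ t₁ ^ 2),
      mul_max_of_nonneg _ _ (by positivity : (0:ℝ) ≤ t₂ ^ 2)]
  -- the key inequality
  have hineq : t₁ ^ 2 * A2 ≤ t₂ ^ 2 * B2 := by
    have hA2CA : A2 ≤ CA := hzAmax hh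
    have hCBB2 : CB ≤ B2 := hzBmin hh
    have h2K : (2:ℝ) ^ K ≤ q ^ K := pow_le_pow_left₀ (by norm_num) hq2 K
    have hstep : A2 ≤ q ^ (2 * k) * B2 := by
      have h1 : A2 ≤ q ^ K * B2 := by
        calc A2 ≤ 2 ^ K * CB := hA2CA.trans hKK
          _ ≤ q ^ K * B2 := by
            apply mul_le_mul h2K hCBB2 hCBpos.le (by positivity)
      have h2 : (q : ℝ) ^ (K : ℤ) ≤ q ^ (2 * k) := by
        apply zpow_le_zpow_right₀ hq1.le
        omega
      calc A2 ≤ q ^ K * B2 := h1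
        _ = q ^ (K : ℤ) * B2 := by rw [zpow_natCast]
        _ ≤ q ^ (2 * k) * B2 := by
            apply mul_le_mul_of_nonneg_right h2 (le_of_lt hB2pos)
    have hpow : t₁ ^ 2 * q ^ (2 * k) = t₂ ^ 2 := by
      rw [ht₁, ht₂, sq, sq, ← zpow_add₀ hq0.ne', ← zpow_add₀ hq0.ne', ← zpow_add₀ hq0.ne']
      congr 1
      rw [hk]; ring
    calc t₁ ^ 2 * A2 ≤ t₁ ^ 2 * (q ^ (2 * k) * B2) :=
          mul_le_mul_of_nonneg_left hstep (by positivity)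
      _ = t₂ ^ 2 * B2 := by rw [← mul_assoc, hpow]
  -- determinant norm
  have hdetnorm : ‖(m * g).det‖ = t₁ * t₂ * D := by
    rw [Matrix.det_mul, hm, Matrix.det_diagonal, Fin.prod_univ_two]
    simp only [Matrix.cons_val_zero, Matrix.cons_val_one, Matrix.head_cons]
    rw [norm_mul, norm_mul, Padic.norm_p_zpow, Padic.norm_p_zpow, hD]
  -- final computation
  have hratio : t₂ ^ 2 * B2 / (t₁ * t₂ * D) = q ^ k * (B2 / D) := by
    have hteq : t₂ ^ 2 = q ^ k * (t₁ * t₂) := by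
      rw [ht₁, ht₂, sq, ← zpow_add₀ hq0.ne', ← zpow_add₀ hq0.ne', ← zpow_add₀ hq0.ne']
      congr 1
      rw [hk]; ring
    rw [hteq]
    field_simp
  rw [F, hsup, max_eq_right hineq, hdetnorm, hratio,
    Real.log_mul (by positivity) (by positivity), Real.log_zpow,
    Real.log_div hB2pos.ne' hDpos.ne', hk, hqdef]
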